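/- Let A ∈ ℝ^{m×n}, C ∈ ℝ^{p×n}, b ∈ ℝᵐ, d ∈ ℝᵖ. Denote by C_A† the weighted pseudoinverse of C, and by A_{N(C)}† the map sending b to the minimum 2-norm minimizer of ‖Ax−b‖₂ over x ∈ N(C). Then the minimum 2-norm solution of the LSE problem (min ‖Ax−b‖₂ subject to ‖Cx−d‖₂ minimal) can be written as x† = C†d + A_{N(C)}†(b − A C†d), where C† is the Moore–Penrose pseudoinverse of C. -/

import Mathlib

open Matrix

private lemma aux_inner_zero {E : Type*} [NormedAddCommGroup E] [InnerProductSpace ℝ E]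
    (x v : E) (h : ∀ t : ℝ, ‖x‖ ≤ ‖x + t • v‖) : (inner ℝ x v : ℝ) = 0 := by
  by_cases hv : v = 0
  · simp [hv]
  · have hvn : (0:ℝ) < ‖v‖ := norm_pos_iff.mpr hv
    set c : ℝ := inner ℝ x v with hc
    set t : ℝ := -c / ‖v‖ ^ 2 with ht
    have h1 := h t
    have h2 : ‖x‖ ^ 2 ≤ ‖x + t • v‖ ^ 2 := pow_le_pow_left₀ (norm_nonneg x) h1 2
    rw [norm_add_sq_real, real_inner_smul_right, norm_smul, mul_pow, Real.norm_eq_abs,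
      sq_abs] at h2
    have hkey : (0:ℝ) ≤ 2 * (t * c) + t ^ 2 * ‖v‖ ^ 2 := by rw [← hc] at h2; linarith
    have h4 : (2 * (t * c) + t ^ 2 * ‖v‖ ^ 2) * ‖v‖ ^ 2 = -(c ^ 2) := by
      rw [ht]; field_simp; ring
    have h5 : (0:ℝ) ≤ -(c ^ 2) := by
      rw [← h4]; exact mul_nonneg hkey (sq_nonneg _)
    have h6 : c ^ 2 = 0 := le_antisymm (by linarith) (sq_nonneg c)
    exact pow_eq_zero_iff two_ne_zero |>.mp h6

private lemma lse_aux {E F G : Type*} [NormedAddCommGroup E] [InnerProductSpace ℝ E]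
    [NormedAddCommGroup F] [InnerProductSpace ℝ F]
    [NormedAddCommGroup G] [InnerProductSpace ℝ G]
    (T : E →ₗ[ℝ] G) (S : E →ₗ[ℝ] F) (b : F) (d : G) (c0 : E)
    (hc_min : ∀ y, ‖T c0 - d‖ ≤ ‖T y - d‖)
    (hc_norm : ∀ y, (∀ z, ‖T y - d‖ ≤ ‖T z - d‖) → ‖c0‖ ≤ ‖y‖)
    (u : E) (hker : u ∈ LinearMap.ker T)
    (hmin : ∀ v ∈ LinearMap.ker T, ‖S u - (b - S c0)‖ ≤ ‖S v - (b - S c0)‖)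
    (hnorm : ∀ v ∈ LinearMap.ker T,
      (∀ w ∈ LinearMap.ker T, ‖S v - (b - S c0)‖ ≤ ‖S w - (b - S c0)‖) → ‖u‖ ≤ ‖v‖) :
    (∀ y, ‖T (c0 + u) - d‖ ≤ ‖T y - d‖) ∧
    (∀ y, (∀ z, ‖T y - d‖ ≤ ‖T z - d‖) → ‖S (c0 + u) - b‖ ≤ ‖S y - b‖) ∧
    (∀ y, ((∀ z, ‖T y - d‖ ≤ ‖T z - d‖) ∧
        (∀ z, (∀ w, ‖T z - d‖ ≤ ‖T w - d‖) → ‖S y - b‖ ≤ ‖S z - b‖)) →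
      ‖c0 + u‖ ≤ ‖y‖) := by
  have hTu : T u = 0 := LinearMap.mem_ker.mp hker
  have hTx : T (c0 + u) = T c0 := by rw [map_add, hTu, add_zero]
  -- characterization: any minimizer y of ‖T · - d‖ satisfies T y = T c0
  have hchar : ∀ y, (∀ z, ‖T y - d‖ ≤ ‖T z - d‖) → T y = T c0 := by
    intro y hy
    have hμ : ‖T y - d‖ = ‖T c0 - d‖ := le_antisymm (hy _) (hc_min _)
    have hmid0 : ‖T c0 - d‖ ≤ ‖T ((1/2 : ℝ) • (y + c0)) - d‖ := hc_min _
    have heq : T ((1/2 : ℝ) • (y + c0)) - d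
        = (1/2 : ℝ) • ((T y - d) + (T c0 - d)) := by
      rw [LinearMap.map_smul, map_add]; module
    rw [heq, norm_smul] at hmid0
    simp only [Real.norm_eq_abs] at hmid0
    have habs : |((1:ℝ)/2)| = 1/2 := by norm_num
    rw [habs] at hmid0
    have hpar := parallelogram_law_with_norm ℝ (T y - d) (T c0 - d)
    have hsub : (T y - d) - (T c0 - d) = T y - T c0 := by abel
    rw [hsub] at hpar
    have hzero : ‖T y - T c0‖ = 0 := by
      nlinarith [norm_nonneg (T y - T c0), norm_nonneg ((T y - d) + (T c0 - d)),
        norm_nonneg (T c0 - d)]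
    exact sub_eq_zero.mp (norm_eq_zero.mp hzero)
  have part1 : ∀ y, ‖T (c0 + u) - d‖ ≤ ‖T y - d‖ := by
    intro y; rw [hTx]; exact hc_min y
  refine ⟨part1, ?_, ?_⟩
  · intro y hy
    have hTy := hchar y hy
    have hvker : y - c0 ∈ LinearMap.ker T := by
      rw [LinearMap.mem_ker, map_sub, hTy, sub_self]
    have e1 : S (c0 + u) - b = S u - (b - S c0) := by rw [map_add]; abel
    have e2 : S y - b = S (y - c0) - (b - S c0) := by rw [map_sub]; abel
    rw [e1, e2]
    exact hmin _ hvker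
  · rintro y ⟨hy1, hy2⟩
    have hTy := hchar y hy1
    have hvker : y - c0 ∈ LinearMap.ker T := by
      rw [LinearMap.mem_ker, map_sub, hTy, sub_self]
    have hvmin : ∀ w ∈ LinearMap.ker T,
        ‖S (y - c0) - (b - S c0)‖ ≤ ‖S w - (b - S c0)‖ := by
      intro w hw
      have hwz : T w = 0 := LinearMap.mem_ker.mp hw
      have hz : ∀ w', ‖T (c0 + w) - d‖ ≤ ‖T w' - d‖ := by
        intro w'
        rw [map_add, hwz, add_zero]
        exact hc_min w'
      have h := hy2 (c0 + w) hz
      have e2 : S y - b = S (y - c0) - (b - S c0) := by rw [map_sub]; abel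
      have e3 : S (c0 + w) - b = S w - (b - S c0) := by rw [map_add]; abel
      rw [e2, e3] at h
      exact h
    have huv : ‖u‖ ≤ ‖y - c0‖ := hnorm _ hvker hvmin
    have horth : ∀ w ∈ LinearMap.ker T, (inner ℝ c0 w : ℝ) = 0 := by
      intro w hw
      have hwz : T w = 0 := LinearMap.mem_ker.mp hw
      apply aux_inner_zero
      intro t
      apply hc_norm
      intro z
      rw [map_add, LinearMap.map_smul, hwz, smul_zero, add_zero]
      exact hc_min z
    have hx2 : ‖c0 + u‖ ^ 2 = ‖c0‖ ^ 2 + ‖u‖ ^ 2 := by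
      rw [norm_add_sq_real, horth u hker]; ring
    have hy2' : ‖y‖ ^ 2 = ‖c0‖ ^ 2 + ‖y - c0‖ ^ 2 := by
      have hyv : y = c0 + (y - c0) := by abel
      conv_lhs => rw [hyv]
      rw [norm_add_sq_real, horth _ hvker]; ring
    have h2 : ‖c0 + u‖ ^ 2 ≤ ‖y‖ ^ 2 := by
      rw [hx2, hy2']
      nlinarith [norm_nonneg u, norm_nonneg (y - c0)]
    nlinarith [norm_nonneg (c0 + u), norm_nonneg y]

/-- The minimum 2-norm solution of the LSE problem is `x† = C†d + A_{N(C)}†(b − AC†d)`: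
with `C†d` the minimum 2-norm minimizer of `‖Cx−d‖` and `A_{N(C)}† y` the minimum 2-norm
minimizer of `‖Ax−y‖` over `N(C)`, the vector `x†` minimizes `‖Ax−b‖` over the set of
minimizers of `‖Cx−d‖` and has minimum norm among all such solutions. -/
theorem lse_decomposed_solution (m n p : ℕ) (A : Matrix (Fin m) (Fin n) ℝ)
    (C : Matrix (Fin p) (Fin n) ℝ) (b : EuclideanSpace ℝ (Fin m)) (d : EuclideanSpace ℝ (Fin p))
    (Cdag_d : EuclideanSpace ℝ (Fin n))
    (hCdag_min : ∀ y, ‖Matrix.toEuclideanLin C Cdag_d - d‖ ≤ ‖Matrix.toEuclideanLin C y - d‖)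
    (hCdag_norm : ∀ y, (∀ z, ‖Matrix.toEuclideanLin C y - d‖ ≤ ‖Matrix.toEuclideanLin C z - d‖) →
      ‖Cdag_d‖ ≤ ‖y‖)
    (ANdag : EuclideanSpace ℝ (Fin m) → EuclideanSpace ℝ (Fin n))
    (hANdag : ∀ y : EuclideanSpace ℝ (Fin m),
      ANdag y ∈ LinearMap.ker (Matrix.toEuclideanLin C) ∧
      (∀ v ∈ LinearMap.ker (Matrix.toEuclideanLin C),
        ‖Matrix.toEuclideanLin A (ANdag y) - y‖ ≤ ‖Matrix.toEuclideanLin A v - y‖) ∧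
      (∀ v ∈ LinearMap.ker (Matrix.toEuclideanLin C),
        (∀ w ∈ LinearMap.ker (Matrix.toEuclideanLin C),
          ‖Matrix.toEuclideanLin A v - y‖ ≤ ‖Matrix.toEuclideanLin A w - y‖) → ‖ANdag y‖ ≤ ‖v‖))
    (xdag : EuclideanSpace ℝ (Fin n))
    (hxdag : xdag = Cdag_d + ANdag (b - Matrix.toEuclideanLin A Cdag_d)) :
    (∀ y, ‖Matrix.toEuclideanLin C xdag - d‖ ≤ ‖Matrix.toEuclideanLin C y - d‖) ∧
    (∀ y, (∀ z, ‖Matrix.toEuclideanLin C y - d‖ ≤ ‖Matrix.toEuclideanLin C z - d‖) →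
      ‖Matrix.toEuclideanLin A xdag - b‖ ≤ ‖Matrix.toEuclideanLin A y - b‖) ∧
    (∀ y, ((∀ z, ‖Matrix.toEuclideanLin C y - d‖ ≤ ‖Matrix.toEuclideanLin C z - d‖) ∧
        (∀ z, (∀ w, ‖Matrix.toEuclideanLin C z - d‖ ≤ ‖Matrix.toEuclideanLin C w - d‖) →
          ‖Matrix.toEuclideanLin A y - b‖ ≤ ‖Matrix.toEuclideanLin A z - b‖)) →
      ‖xdag‖ ≤ ‖y‖) := by
  obtain ⟨hker, hmin, hnorm⟩ := hANdag (b - Matrix.toEuclideanLin A Cdag_d)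
  rw [hxdag]
  exact lse_aux (Matrix.toEuclideanLin C) (Matrix.toEuclideanLin A) b d Cdag_d
    hCdag_min hCdag_norm _ hker hmin hnorm
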